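/- Let A be a commutative local ring and let M be a free A-module of rank 1. Suppose M is the internal direct sum of a family (N_i)_{i ∈ I} of A-submodules. Then there exist an index i ∈ I and an element x ∈ N_i such that x generates M, i.e., the A-span of x is all of M. -/

import Mathlib

/-- Every element of a rank-1 free module is a scalar multiple of the basis vector. -/
lemma aux_eq_smul {A M : Type*} [CommRing A] [AddCommGroup M] [Module A M]
    (b : Module.Basis (Fin 1) A M) (x : M) : x = b.coord 0 x • b 0 := by
  have := b.sum_repr x
  simpa [Fin.sum_univ_one, Module.Basis.coord_apply] using this.symm

theorem stmt5 {A M ι : Type*} [CommRing A] [IsLocalRing A] [AddCommGroup M] [Module A M]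
    [DecidableEq ι] (b : Module.Basis (Fin 1) A M) (N : ι → Submodule A M)
    (h : DirectSum.IsInternal N) :
    ∃ i : ι, ∃ x ∈ N i, Submodule.span A ({x} : Set M) = ⊤ := by
  classical
  set m : M := b 0 with hm
  -- decompose m
  obtain ⟨d, hd⟩ := h.surjective m
  -- m = sum of components
  have hsum : (∑ i ∈ d.support, (d i : M)) = m := by
    rw [← hd]
    conv_rhs => rw [← DirectSum.sum_support_of d]
    rw [map_sum]
    simp [DirectSum.coeAddMonoidHom_of]
  -- coordinates
  set a : ι → A := fun i => b.coord 0 (d i) with ha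
  have hcoord : (∑ i ∈ d.support, a i) = 1 := by
    have : b.coord 0 (∑ i ∈ d.support, (d i : M)) = b.coord 0 m := by rw [hsum]
    simpa [ha, hm, map_sum, Module.Basis.coord_apply, Module.Basis.repr_self] using this
  -- some a i is a unit
  have hunit : ∃ i ∈ d.support, IsUnit (a i) := by
    by_contra hno
    push_neg at hno
    have hmem : (∑ i ∈ d.support, a i) ∈ IsLocalRing.maximalIdeal A :=
      Ideal.sum_mem _ fun i hi => hno i hi
    rw [hcoord] at hmem
    exact (IsLocalRing.maximalIdeal.isMaximal A).ne_top (Ideal.eq_top_of_isUnit_mem _ hmem isUnit_one)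
  obtain ⟨i, _, hu⟩ := hunit
  refine ⟨i, (d i : M), (d i).2, ?_⟩
  -- d i = a i • m, with a i a unit, and m generates
  have hx : (d i : M) = a i • m := aux_eq_smul b (d i)
  obtain ⟨u, hu⟩ := hu
  have hmmem : m ∈ Submodule.span A ({(d i : M)} : Set M) := by
    have : (↑u⁻¹ : A) • (d i : M) = m := by
      rw [hx, ← smul_assoc, smul_eq_mul, ← hu, Units.inv_mul, one_smul]
    rw [← this]
    exact Submodule.smul_mem _ _ (Submodule.mem_span_singleton_self _)
  rw [eq_top_iff]
  intro x _
  rw [aux_eq_smul b x]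
  exact Submodule.smul_mem _ _ hmmem
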